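/- Let G be a finite abelian group and H ⊆ G a subgroup. Then w(H) ⊆ w(G), and equality w(H) = w(G) holds if and only if H = G. -/

import Mathlib

open Multiset Pointwise

/-- Cross number of a sequence (multiset) over an additive group. -/
noncomputable def crossNum {G : Type*} [AddCommGroup G] (S : Multiset G) : ℚ :=
  (S.map (fun g => (1 : ℚ) / (addOrderOf g : ℚ))).sum

/-- A sequence is zero-sum free if no non-empty subsequence sums to zero. -/
def IsZeroSumFree {G : Type*} [AddCommGroup G] (S : Multiset G) : Prop :=
  ∀ T : Multiset G, T ≤ S → T ≠ 0 → T.sum ≠ (0 : G)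

/-- A minimal zero-sum sequence: non-trivial, sum zero, no proper non-trivial
zero-sum subsequence. -/
def IsMinZeroSum {G : Type*} [AddCommGroup G] (S : Multiset G) : Prop :=
  S ≠ 0 ∧ S.sum = 0 ∧ ∀ T : Multiset G, T < S → T ≠ 0 → T.sum ≠ (0 : G)

/-- `wSet G` : set of cross numbers of non-trivial zero-sum free sequences over `G`. -/
def wSet (G : Type*) [AddCommGroup G] : Set ℚ :=
  { k | ∃ S : Multiset G, S ≠ 0 ∧ IsZeroSumFree S ∧ crossNum S = k }

/-- `WSet G` : set of cross numbers of minimal zero-sum sequences over `G`. -/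
def WSet (G : Type*) [AddCommGroup G] : Set ℚ :=
  { k | ∃ S : Multiset G, IsMinZeroSum S ∧ crossNum S = k }

/-- Any sub-multiset of a mapped multiset is itself the image of a sub-multiset. -/
lemma exists_preimage_of_le_map {α β : Type*} {f : α → β} {S : Multiset α} :
    ∀ {T : Multiset β}, T ≤ S.map f → ∃ T', T' ≤ S ∧ T'.map f = T := by
  induction S using Multiset.induction_on with
  | empty =>
    intro T hT
    simp only [Multiset.map_zero, Multiset.le_zero] at hT
    exact ⟨0, le_refl _, by simp [hT]⟩
  | cons a s ih =>
    intro T hT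
    classical
    rw [Multiset.map_cons] at hT
    by_cases hfa : f a ∈ T
    · have h1 : T.erase (f a) ≤ (f a ::ₘ s.map f).erase (f a) :=
        Multiset.erase_le_erase _ hT
      rw [Multiset.erase_cons_head] at h1
      obtain ⟨T', hT'le, hT'map⟩ := ih h1
      refine ⟨a ::ₘ T', Multiset.cons_le_cons _ hT'le, ?_⟩
      rw [Multiset.map_cons, hT'map, Multiset.cons_erase hfa]
    · have h1 : T ≤ s.map f := by
        rw [Multiset.le_iff_count]
        intro b
        by_cases hb : b = f a
        · subst hb
          simp [Multiset.count_eq_zero_of_notMem hfa]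
        · have := Multiset.le_iff_count.mp hT b
          rwa [Multiset.count_cons_of_ne hb] at this
      obtain ⟨T', hT'le, hT'map⟩ := ih h1
      exact ⟨T', le_trans hT'le (Multiset.le_cons_self _ _), hT'map⟩

lemma crossNum_map {A B : Type*} [AddCommGroup A] [AddCommGroup B] (f : A →+ B)
    (hf : Function.Injective f) (S : Multiset A) : crossNum (S.map f) = crossNum S := by
  unfold crossNum
  rw [Multiset.map_map]
  congr 1
  apply Multiset.map_congr rfl
  intro a _
  simp [addOrderOf_injective f hf a]

lemma isZeroSumFree_map {A B : Type*} [AddCommGroup A] [AddCommGroup B] (f : A →+ B)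
    (hf : Function.Injective f) {S : Multiset A} (hS : IsZeroSumFree S) :
    IsZeroSumFree (S.map f) := by
  classical
  intro T hT hT0
  obtain ⟨T', hT'le, hT'map⟩ := exists_preimage_of_le_map hT
  have hT'0 : T' ≠ 0 := by
    rintro rfl; simp at hT'map; exact hT0 hT'map.symm
  have hsum : T.sum = f T'.sum := by
    rw [← hT'map, ← map_multiset_sum]
  rw [hsum]
  intro h
  exact hS T' hT'le hT'0 (hf (h.trans (_root_.map_zero f).symm))

lemma wSet_mono {A B : Type*} [AddCommGroup A] [AddCommGroup B] (f : A →+ B)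
    (hf : Function.Injective f) : wSet A ⊆ wSet B := by
  rintro k ⟨S, hS0, hzsf, hk⟩
  refine ⟨S.map f, ?_, isZeroSumFree_map f hf hzsf, by rw [crossNum_map f hf, hk]⟩
  simpa using hS0

lemma crossNum_cons {G : Type*} [AddCommGroup G] (a : G) (S : Multiset G) :
    crossNum (a ::ₘ S) = 1 / (addOrderOf a : ℚ) + crossNum S := by
  simp [crossNum]

lemma crossNum_le_bound {G : Type*} [AddCommGroup G] [Fintype G] {S : Multiset G}
    (hS : IsZeroSumFree S) :
    crossNum S ≤ ((Fintype.card G * Fintype.card G : ℕ) : ℚ) := by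
  classical
  have hcard : Multiset.card S ≤ Fintype.card G * Fintype.card G := by
    have hcount : ∀ a : G, S.count a ≤ Fintype.card G := by
      intro a
      have hord : 0 < addOrderOf a := addOrderOf_pos a
      have h1 : S.count a < addOrderOf a := by
        by_contra h
        push_neg at h
        have hrep : Multiset.replicate (addOrderOf a) a ≤ S :=
          Multiset.le_count_iff_replicate_le.mp h
        have hne : Multiset.replicate (addOrderOf a) a ≠ 0 := by
          intro hcon
          have := congrArg Multiset.card hcon
          simp only [Multiset.card_replicate, Multiset.card_zero] at this
          omega
        have hsum : (Multiset.replicate (addOrderOf a) a).sum = 0 := by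
          rw [Multiset.sum_replicate]
          exact addOrderOf_nsmul_eq_zero a
        exact hS _ hrep hne hsum
      exact le_trans (Nat.le_of_lt h1) (addOrderOf_le_card_univ)
    calc Multiset.card S = ∑ a ∈ S.toFinset, S.count a :=
          (Multiset.toFinset_sum_count_eq S).symm
      _ ≤ ∑ _a ∈ S.toFinset, Fintype.card G :=
          Finset.sum_le_sum fun a _ => hcount a
      _ = S.toFinset.card * Fintype.card G := by rw [Finset.sum_const, smul_eq_mul]
      _ ≤ Fintype.card G * Fintype.card G :=
          Nat.mul_le_mul_right _ (Finset.card_le_univ _)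
  have h1 : crossNum S ≤ (Multiset.card S : ℚ) := by
    unfold crossNum
    calc (S.map fun g => (1 : ℚ) / (addOrderOf g : ℚ)).sum
        ≤ Multiset.card (S.map fun g => (1 : ℚ) / (addOrderOf g : ℚ)) • (1 : ℚ) := by
          apply Multiset.sum_le_card_nsmul
          intro x hx
          obtain ⟨g, _, rfl⟩ := Multiset.mem_map.mp hx
          rcases Nat.eq_zero_or_pos (addOrderOf g) with h | h
          · simp [h]
          · rw [div_le_one (by exact_mod_cast h)]
            exact_mod_cast h
      _ = (Multiset.card S : ℚ) := by simp
  calc crossNum S ≤ (Multiset.card S : ℚ) := h1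
    _ ≤ ((Fintype.card G * Fintype.card G : ℕ) : ℚ) := by exact_mod_cast hcard

lemma wSet_step {G : Type*} [AddCommGroup G] (H : AddSubgroup G) {g : G} (hg : g ∉ H)
    {k : ℚ} (hk : k ∈ wSet H) : k + 1 / (addOrderOf g : ℚ) ∈ wSet G := by
  classical
  obtain ⟨S, hS0, hzsf, hkeq⟩ := hk
  refine ⟨g ::ₘ S.map H.subtype, Multiset.cons_ne_zero, ?_, ?_⟩
  · intro T hT hT0
    have herase : T.erase g ≤ S.map H.subtype := by
      have := Multiset.erase_le_erase g hT
      rwa [Multiset.erase_cons_head] at this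
    obtain ⟨T', hT'le, hT'map⟩ := exists_preimage_of_le_map herase
    have hsum' : (T.erase g).sum ∈ H := by
      rw [← hT'map, ← map_multiset_sum]
      exact (T'.sum : H).2
    by_cases hgT : g ∈ T
    · have hTeq : T = g ::ₘ T.erase g := (Multiset.cons_erase hgT).symm
      rw [hTeq, Multiset.sum_cons]
      intro h
      have : g = -(T.erase g).sum := eq_neg_of_add_eq_zero_left h
      rw [this] at hg
      exact hg (neg_mem hsum')
    · rw [Multiset.erase_of_notMem hgT] at hT'map hsum'
      have hT'0 : T' ≠ 0 := by
        rintro rfl; simp at hT'map; exact hT0 hT'map.symm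
      have : T.sum = ((T'.sum : H) : G) := by rw [← hT'map, ← map_multiset_sum]; rfl
      rw [this]
      intro h
      exact hzsf T' hT'le hT'0 (by exact_mod_cast h)
  · rw [crossNum_cons, crossNum_map H.subtype Subtype.coe_injective, hkeq]
    ring

theorem stmt1 (G : Type*) [AddCommGroup G] [Fintype G] (H : AddSubgroup G) :
    wSet H ⊆ wSet G ∧ (wSet H = wSet G ↔ H = ⊤) := by
  have hsub : wSet H ⊆ wSet G := wSet_mono H.subtype Subtype.coe_injective
  refine ⟨hsub, ?_, ?_⟩
  · -- wSet H = wSet G → H = ⊤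
    intro hEq
    by_contra hne
    rw [AddSubgroup.eq_top_iff'] at hne
    push_neg at hne
    obtain ⟨g, hg⟩ := hne
    set q : ℚ := 1 / (addOrderOf g : ℚ) with hq_def
    have hordpos : 0 < addOrderOf g := addOrderOf_pos g
    have hq : 0 < q := by
      rw [hq_def]
      positivity
    -- base case: q ∈ wSet G
    have hbase : q ∈ wSet G := by
      refine ⟨{g}, by simp, ?_, by simp [crossNum, hq_def, one_div]⟩
      intro T hT hT0
      rcases Multiset.le_singleton.mp hT with rfl | rfl
      · exact absurd rfl hT0
      · simp only [Multiset.sum_singleton]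
        intro h
        rw [h] at hg
        exact hg (zero_mem H)
    -- step: closed under adding q
    have hstep : ∀ k ∈ wSet G, k + q ∈ wSet G := by
      intro k hk
      rw [← hEq] at hk
      exact wSet_step H hg hk
    have hiter : ∀ n : ℕ, q + n * q ∈ wSet G := by
      intro n
      induction n with
      | zero => simpa using hbase
      | succ n ih =>
        have := hstep _ ih
        convert this using 1
        push_cast
        ring
    obtain ⟨n, hn⟩ := exists_nat_gt (((Fintype.card G * Fintype.card G : ℕ) : ℚ) / q)
    have hgt : ((Fintype.card G * Fintype.card G : ℕ) : ℚ) < q + n * q := by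
      have h1 : ((Fintype.card G * Fintype.card G : ℕ) : ℚ) < n * q := by
        rw [div_lt_iff₀ hq] at hn
        linarith [mul_comm (n : ℚ) q]
      linarith
    obtain ⟨S, _, hzsf, hkeq⟩ := hiter n
    have := crossNum_le_bound hzsf
    rw [hkeq] at this
    linarith
  · -- H = ⊤ → wSet H = wSet G
    rintro rfl
    apply le_antisymm hsub
    exact wSet_mono (AddSubgroup.topEquiv.symm : G ≃+ (⊤ : AddSubgroup G)).toAddMonoidHom
      (AddSubgroup.topEquiv.symm.injective)
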